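/- For integers k, j ≥ 0: if μ > −1 and j ≥ 1 then ∂/∂z̄ Q^μ_{k,j}(z,w) = (j(k+μ+1)/(μ+1)) Q^{μ+1}_{k,j−1}(z,w), while for j = 0 the left-hand side vanishes; and if μ > 0 then (1−zw) ∂/∂z Q^μ_{k,j}(z,w) − μ w Q^μ_{k,j}(z,w) = −μ Q^{μ−1}_{k,j+1}(z,w). These are identities of bivariate polynomials in (z,w). -/

import Mathlib

noncomputable def jacobiP (α β : ℝ) (n : ℕ) : Polynomial ℝ :=
  (n.factorial : ℝ)⁻¹ •
    ∑ k ∈ Finset.range (n + 1),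
      ((n.choose k : ℝ) * ((ascPochhammer ℝ (n - k)).eval ((k : ℝ) + α + 1)) *
          ((ascPochhammer ℝ k).eval ((n : ℝ) + α + β + 1))) •
        ((Polynomial.X - 1) * Polynomial.C (2⁻¹ : ℝ)) ^ k

noncomputable def zernikeQ (μ : ℝ) (k j : ℕ) : MvPolynomial (Fin 2) ℂ :=
  if j ≤ k then
    MvPolynomial.C ((((j.factorial : ℝ) / ((ascPochhammer ℝ j).eval (μ + 1)) : ℝ) : ℂ)) *
      MvPolynomial.X 0 ^ (k - j) *
      Polynomial.aeval (2 * MvPolynomial.X 0 * MvPolynomial.X 1 - 1)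
        (jacobiP μ ((k - j : ℕ) : ℝ) j)
  else
    MvPolynomial.C ((((k.factorial : ℝ) / ((ascPochhammer ℝ k).eval (μ + 1)) : ℝ) : ℂ)) *
      MvPolynomial.X 1 ^ (j - k) *
      Polynomial.aeval (2 * MvPolynomial.X 0 * MvPolynomial.X 1 - 1)
        (jacobiP μ ((j - k : ℕ) : ℝ) k)

open Polynomial in
lemma poch_succ_right' (x : ℝ) (n : ℕ) :
    (ascPochhammer ℝ (n+1)).eval x = (ascPochhammer ℝ n).eval x * (x + n) := by
  rw [ascPochhammer_succ_right]; simp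

open Polynomial in
lemma poch_succ_left' (x : ℝ) (n : ℕ) :
    (ascPochhammer ℝ (n+1)).eval x = x * (ascPochhammer ℝ n).eval (x+1) := by
  rw [ascPochhammer_succ_left]; simp [Polynomial.eval_comp]

open Polynomial in
lemma poch_mul_eval (x : ℝ) (n m : ℕ) :
    (ascPochhammer ℝ n).eval x * (ascPochhammer ℝ m).eval (x + n) = (ascPochhammer ℝ (n+m)).eval x := by
  rw [← ascPochhammer_mul]; simp [Polynomial.eval_comp]

noncomputable def zc (x y : ℝ) (a m : ℕ) : ℝ :=
  (a.choose m : ℝ) * (ascPochhammer ℝ m).eval y / (ascPochhammer ℝ m).eval x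

noncomputable def Tz : MvPolynomial (Fin 2) ℂ := MvPolynomial.X 0 * MvPolynomial.X 1 - 1

noncomputable def zser (x y : ℝ) (a : ℕ) : MvPolynomial (Fin 2) ℂ :=
  ∑ m ∈ Finset.range (a+1), MvPolynomial.C ((zc x y a m : ℝ) : ℂ) * Tz ^ m

open MvPolynomial in
lemma rsmul_eq (r : ℝ) (p : MvPolynomial (Fin 2) ℂ) : r • p = C ((r:ℂ)) * p := by
  rw [show ((r:ℂ)) = algebraMap ℝ ℂ r from rfl, ← smul_eq_C_mul, algebraMap_smul]

open MvPolynomial in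
lemma expand_core (μ : ℝ) (hμ : -1 < μ) (a b : ℕ) :
    C ((((a.factorial : ℝ) / ((ascPochhammer ℝ a).eval (μ + 1)) : ℝ) : ℂ)) *
      Polynomial.aeval (2 * X 0 * X 1 - 1 : MvPolynomial (Fin 2) ℂ) (jacobiP μ (b : ℝ) a)
    = zser (μ+1) ((a:ℝ)+(b:ℝ)+μ+1) a := by
  have hx : (0:ℝ) < μ + 1 := by linarith
  unfold jacobiP zser Tz
  rw [map_smul, map_sum, rsmul_eq, Finset.mul_sum, Finset.mul_sum]
  refine Finset.sum_congr rfl fun m hm => ?_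
  rw [Finset.mem_range, Nat.lt_succ_iff] at hm
  rw [map_smul, rsmul_eq, map_pow, map_mul, map_sub, map_one, Polynomial.aeval_X]
  have hbase : ((2 * X 0 * X 1 - 1 - 1) * Polynomial.aeval (2 * X 0 * X 1 - 1 : MvPolynomial (Fin 2) ℂ) (Polynomial.C (2⁻¹:ℝ)))
      = (X 0 * X 1 - 1 : MvPolynomial (Fin 2) ℂ) := by
    rw [Polynomial.aeval_C]
    rw [show (algebraMap ℝ (MvPolynomial (Fin 2) ℂ)) (2⁻¹:ℝ) = C ((2⁻¹:ℂ)) by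
      rw [IsScalarTower.algebraMap_apply ℝ ℂ (MvPolynomial (Fin 2) ℂ)]; norm_num]
    rw [show (2 * X 0 * X 1 - 1 - 1 : MvPolynomial (Fin 2) ℂ) = C 2 * (X 0 * X 1 - 1) by
      rw [show (C 2 : MvPolynomial (Fin 2) ℂ) = 2 from map_ofNat C 2]; ring]
    rw [mul_comm (C 2 * _), ← mul_assoc, ← C_mul]
    norm_num
  rw [hbase, ← mul_assoc, ← C_mul, ← mul_assoc, ← C_mul]
  congr 2
  rw [← Complex.ofReal_mul, ← Complex.ofReal_mul]
  congr 1
  have key : (ascPochhammer ℝ m).eval (μ+1) * (ascPochhammer ℝ (a-m)).eval ((μ+1) + m)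
      = (ascPochhammer ℝ a).eval (μ+1) := by
    have := poch_mul_eval (μ+1) m (a-m)
    rwa [Nat.add_sub_cancel' hm] at this
  have h1 : (0:ℝ) < (ascPochhammer ℝ a).eval (μ+1) := ascPochhammer_pos a _ hx
  have h2 : (0:ℝ) < (ascPochhammer ℝ m).eval (μ+1) := ascPochhammer_pos m _ hx
  have hfac : (a.factorial : ℝ) ≠ 0 := Nat.cast_ne_zero.mpr a.factorial_ne_zero
  rw [show ((m:ℝ) + μ + 1) = (μ+1) + m by ring, show ((a:ℝ) + μ + (b:ℝ) + 1) = (a:ℝ)+(b:ℝ)+μ+1 by ring]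
  unfold zc
  field_simp
  linear_combination ((a.choose m : ℝ) * (ascPochhammer ℝ m).eval ((a:ℝ)+(b:ℝ)+μ+1)) * key

open MvPolynomial in
lemma expand_le (μ : ℝ) (hμ : -1 < μ) {k j : ℕ} (h : j ≤ k) :
    zernikeQ μ k j = X 0 ^ (k - j) * zser (μ+1) ((k:ℝ)+μ+1) j := by
  unfold zernikeQ
  rw [if_pos h, mul_comm (C _) (X 0 ^ (k-j)), mul_assoc, expand_core μ hμ j (k-j)]
  congr 2
  rw [Nat.cast_sub h]; ring

open MvPolynomial in
lemma expand_ge (μ : ℝ) (hμ : -1 < μ) {k j : ℕ} (h : k ≤ j) :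
    zernikeQ μ k j = X 1 ^ (j - k) * zser (μ+1) ((j:ℝ)+μ+1) k := by
  unfold zernikeQ
  by_cases h' : j ≤ k
  · have hkj : j = k := le_antisymm h' h
    subst hkj
    rw [if_pos le_rfl, Nat.sub_self, pow_zero, mul_comm (C _) 1, mul_assoc,
      expand_core μ hμ j 0]
    norm_num
  · rw [if_neg h', mul_comm (C _) (X 1 ^ (j-k)), mul_assoc, expand_core μ hμ k (j-k)]
    congr 2
    rw [Nat.cast_sub h]; ring

open MvPolynomial in
lemma pd1_Tz : pderiv (1 : Fin 2) Tz = X 0 := by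
  unfold Tz
  rw [map_sub, pderiv_mul, pderiv_X_self, pderiv_X_of_ne (show (0:Fin 2) ≠ 1 by decide)]
  simp

open MvPolynomial in
lemma pd0_Tz : pderiv (0 : Fin 2) Tz = X 1 := by
  unfold Tz
  rw [map_sub, pderiv_mul, pderiv_X_self, pderiv_X_of_ne (show (1:Fin 2) ≠ 0 by decide)]
  simp

open MvPolynomial in
lemma pd1_zser (x y : ℝ) (a : ℕ) :
    pderiv (1 : Fin 2) (zser x y a)
      = ∑ m ∈ Finset.range (a+1), C ((((m:ℝ) * zc x y a m : ℝ)) : ℂ) * (Tz ^ (m-1) * X 0) := by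
  unfold zser
  rw [map_sum]
  refine Finset.sum_congr rfl fun m _ => ?_
  rw [pderiv_C_mul, pderiv_pow, pd1_Tz,
    show ((((m:ℝ) * zc x y a m : ℝ)) : ℂ) = (m:ℂ) * ((zc x y a m : ℝ):ℂ) by push_cast; ring,
    map_mul, map_natCast]
  ring

open MvPolynomial in
lemma pd0_zser (x y : ℝ) (a : ℕ) :
    pderiv (0 : Fin 2) (zser x y a)
      = ∑ m ∈ Finset.range (a+1), C ((((m:ℝ) * zc x y a m : ℝ)) : ℂ) * (Tz ^ (m-1) * X 1) := by
  unfold zser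
  rw [map_sum]
  refine Finset.sum_congr rfl fun m _ => ?_
  rw [pderiv_C_mul, pderiv_pow, pd0_Tz,
    show ((((m:ℝ) * zc x y a m : ℝ)) : ℂ) = (m:ℂ) * ((zc x y a m : ℝ):ℂ) by push_cast; ring,
    map_mul, map_natCast]
  ring


lemma rid1 (μ : ℝ) (hμ : -1 < μ) (k j' m : ℕ) :
    ((m:ℝ)+1) * zc (μ+1) ((k:ℝ)+μ+1) (j'+1) (m+1)
      = (((j':ℝ)+1) * ((k:ℝ)+μ+1)/(μ+1)) * zc ((μ+1)+1) (((k:ℝ)+μ+1)+1) j' m := by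
  unfold zc
  rw [poch_succ_left' (μ+1) m, poch_succ_left' ((k:ℝ)+μ+1) m]
  have hch : ((j'+1).choose (m+1) : ℝ) * ((m:ℝ)+1) = ((j':ℝ)+1) * (j'.choose m : ℝ) := by
    have h := Nat.add_one_mul_choose_eq j' m
    have h2 : ((Nat.succ j' * j'.choose m : ℕ) : ℝ) = (((j'+1).choose (m+1) * Nat.succ m : ℕ) : ℝ) :=
      congrArg _ h
    push_cast at h2
    linarith
  have h1 : (0:ℝ) < (ascPochhammer ℝ m).eval ((μ+1)+1) := ascPochhammer_pos m _ (by linarith)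
  have h2 : (μ+1) ≠ 0 := by linarith
  field_simp
  linear_combination (((k:ℝ)+μ+1) * (ascPochhammer ℝ m).eval (((k:ℝ)+μ+1)+1)) * hch

open MvPolynomial in
lemma part1_le (μ : ℝ) (hμ : -1 < μ) (k j' : ℕ) (h : j'+1 ≤ k) :
    pderiv (1:Fin 2) (zernikeQ μ k (j'+1))
      = C (((((j':ℝ)+1) * ((k:ℝ)+μ+1)/(μ+1) : ℝ)) : ℂ) * zernikeQ (μ+1) k j' := by
  have hμ1 : (-1:ℝ) < μ+1 := by linarith
  rw [expand_le μ hμ h, expand_le (μ+1) hμ1 (show j' ≤ k by omega)]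
  rw [pderiv_mul, pd1_zser]
  rw [show pderiv (1:Fin 2) ((X 0 : MvPolynomial (Fin 2) ℂ) ^ (k-(j'+1))) = 0 by
    rw [pderiv_pow, pderiv_X_of_ne (show (0:Fin 2) ≠ 1 by decide)]; ring]
  rw [zero_mul, zero_add, Finset.mul_sum, Finset.sum_range_succ']
  rw [show ((((0:ℕ):ℝ) * zc (μ+1) ((k:ℝ)+μ+1) (j'+1) 0 : ℝ) : ℂ) = 0 by push_cast; ring]
  rw [map_zero, zero_mul, mul_zero, add_zero, zser, Finset.mul_sum, Finset.mul_sum]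
  refine Finset.sum_congr rfl fun m hm => ?_
  rw [show (k:ℝ)+(μ+1)+1 = ((k:ℝ)+μ+1)+1 by ring]
  rw [show ((((m+1:ℕ):ℝ) * zc (μ+1) ((k:ℝ)+μ+1) (j'+1) (m+1) : ℝ) : ℂ)
      = ((((((j':ℝ)+1) * ((k:ℝ)+μ+1)/(μ+1)) : ℝ) : ℂ)) * ((zc ((μ+1)+1) (((k:ℝ)+μ+1)+1) j' m : ℝ) : ℂ) by
    rw [← Complex.ofReal_mul]
    congr 1
    rw [show (((m+1:ℕ):ℝ)) = (m:ℝ)+1 by push_cast; ring]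
    exact rid1 μ hμ k j' m]
  rw [map_mul, show k - j' = (k-(j'+1))+1 by omega, pow_succ, Nat.add_sub_cancel]
  ring


lemma poch_shift (x : ℝ) (hx : x ≠ 0) (m : ℕ) :
    (ascPochhammer ℝ m).eval (x+1) = (ascPochhammer ℝ m).eval x * (x + m) / x := by
  have h := (poch_succ_left' x m).symm.trans (poch_succ_right' x m)
  field_simp
  linarith [h]

lemma choose_right_cast (k m : ℕ) (hm : m ≤ k) :
    ((k.choose (m+1) : ℝ)) * ((m:ℝ)+1) = (k.choose m : ℝ) * ((k:ℝ) - m) := by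
  have h := Nat.choose_succ_right_eq k m
  have h2 : ((k.choose (m+1) * (m+1) : ℕ) : ℝ) = ((k.choose m * (k - m) : ℕ) : ℝ) := congrArg _ h
  push_cast [Nat.cast_sub hm] at h2
  linarith

lemma rid2 (μ : ℝ) (hμ : -1 < μ) (k j' m : ℕ) (hm : m ≤ k) (hk : k ≤ j') :
    (((j':ℝ)+1-(k:ℝ)) + (m:ℝ)) * zc (μ+1) ((j':ℝ)+1+μ+1) k m
        + ((m:ℝ)+1) * zc (μ+1) ((j':ℝ)+1+μ+1) k (m+1)
      = (((j':ℝ)+1) * ((k:ℝ)+μ+1)/(μ+1)) * zc ((μ+1)+1) ((j':ℝ)+1+μ+1) k m := by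
  have hx : (0:ℝ) < μ + 1 := by linarith
  unfold zc
  rw [poch_succ_right' (μ+1) m, poch_succ_right' ((j':ℝ)+1+μ+1) m,
    poch_shift (μ+1) (by linarith) m]
  have hch := choose_right_cast k m hm
  have hsub : ((k.choose (m+1)):ℝ) = (k.choose m : ℝ)*((k:ℝ)-(m:ℝ))/((m:ℝ)+1) := by
    have hm1 : ((m:ℝ)+1) ≠ 0 := by positivity
    field_simp
    linarith
  rw [hsub]
  have h1 : (0:ℝ) < (ascPochhammer ℝ m).eval (μ+1) := ascPochhammer_pos m _ hx
  have h2 : (0:ℝ) < (μ+1) + (m:ℝ) := by positivity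
  have h3 : ((m:ℝ)+1) ≠ 0 := by positivity
  field_simp
  ring

open MvPolynomial in
lemma hX01 : (X 0 : MvPolynomial (Fin 2) ℂ) * X 1 = Tz + 1 := by unfold Tz; ring

open MvPolynomial in
lemma part1_gt (μ : ℝ) (hμ : -1 < μ) (k j' : ℕ) (h : k ≤ j') :
    pderiv (1:Fin 2) (zernikeQ μ k (j'+1))
      = C (((((j':ℝ)+1) * ((k:ℝ)+μ+1)/(μ+1) : ℝ)) : ℂ) * zernikeQ (μ+1) k j' := by
  have hμ1 : (-1:ℝ) < μ+1 := by linarith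
  rw [expand_ge μ hμ (show k ≤ j'+1 by omega), expand_ge (μ+1) hμ1 h, pderiv_mul, pd1_zser,
    pderiv_pow, pderiv_X_self, mul_one]
  set y : ℝ := ((j'+1:ℕ):ℝ) + μ + 1 with hy
  have hyy : (j':ℝ) + (μ+1) + 1 = y := by rw [hy]; push_cast; ring
  rw [hyy]
  have key : (((j'+1-k:ℕ)) : MvPolynomial (Fin 2) ℂ) * zser (μ+1) y k
        + X 1 * (∑ m ∈ Finset.range (k+1),
            C ((((m:ℝ) * zc (μ+1) y k m : ℝ)) : ℂ) * (Tz ^ (m-1) * X 0))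
      = C (((((j':ℝ)+1) * ((k:ℝ)+μ+1)/(μ+1) : ℝ)) : ℂ) * zser ((μ+1)+1) y k := by
    have hS1 : X 1 * (∑ m ∈ Finset.range (k+1),
          C ((((m:ℝ) * zc (μ+1) y k m : ℝ)) : ℂ) * (Tz ^ (m-1) * X 0))
        = ∑ m ∈ Finset.range (k+1),
            (C ((((m:ℝ) * zc (μ+1) y k m : ℝ)) : ℂ) * Tz ^ m
              + C ((((m:ℝ) * zc (μ+1) y k m : ℝ)) : ℂ) * Tz ^ (m-1)) := by
      rw [Finset.mul_sum]
      refine Finset.sum_congr rfl fun m _ => ?_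
      match m with
      | 0 => norm_num
      | n+1 =>
        rw [show (X 1 : MvPolynomial (Fin 2) ℂ) * (C ((((n+1:ℕ):ℝ) * zc (μ+1) y k (n+1) : ℝ) : ℂ) * (Tz ^ (n+1-1) * X 0))
            = C ((((n+1:ℕ):ℝ) * zc (μ+1) y k (n+1) : ℝ) : ℂ) * (Tz ^ n * (X 0 * X 1)) by
          simp only [Nat.add_sub_cancel]; ring, hX01]
        simp only [Nat.add_sub_cancel]
        ring
    rw [hS1, Finset.sum_add_distrib]
    have hshift : (∑ m ∈ Finset.range (k+1),
          C ((((m:ℝ) * zc (μ+1) y k m : ℝ)) : ℂ) * Tz ^ (m-1))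
        = ∑ m ∈ Finset.range (k+1),
            C (((((m:ℝ)+1) * zc (μ+1) y k (m+1) : ℝ)) : ℂ) * Tz ^ m := by
      rw [Finset.sum_range_succ' (fun m => C ((((m:ℝ) * zc (μ+1) y k m : ℝ)) : ℂ) * Tz ^ (m-1)) k,
        Finset.sum_range_succ (fun m => C (((((m:ℝ)+1) * zc (μ+1) y k (m+1) : ℝ)) : ℂ) * Tz ^ m) k]
      have hz : zc (μ+1) y k (k+1) = 0 := by unfold zc; simp
      simp only [hz, Nat.cast_zero, zero_mul, mul_zero, map_zero, add_zero, Complex.ofReal_zero]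
      refine Finset.sum_congr rfl fun m _ => ?_
      push_cast
      simp only [Nat.add_sub_cancel]
    rw [hshift]
    unfold zser
    simp only [Finset.mul_sum, ← Finset.sum_add_distrib]
    refine Finset.sum_congr rfl fun m hm => ?_
    rw [Finset.mem_range, Nat.lt_succ_iff] at hm
    rw [show (((j'+1-k:ℕ)) : MvPolynomial (Fin 2) ℂ) = C ((((j'+1-k:ℕ):ℝ):ℂ)) by
      push_cast; simp]
    have hco : ((j'+1-k:ℕ):ℝ) * zc (μ+1) y k m
          + ((m:ℝ) * zc (μ+1) y k m + ((m:ℝ)+1) * zc (μ+1) y k (m+1))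
        = (((j':ℝ)+1) * ((k:ℝ)+μ+1)/(μ+1)) * zc ((μ+1)+1) y k m := by
      have hr := rid2 μ hμ k j' m hm h
      rw [show (j':ℝ)+1+μ+1 = y by rw [hy]; push_cast; ring] at hr
      rw [show ((j'+1-k:ℕ):ℝ) = (j':ℝ)+1-(k:ℝ) by
        rw [Nat.cast_sub (by omega)]; push_cast; ring]
      linarith [hr]
    have hC : (C ((((j'+1-k:ℕ):ℝ):ℂ)) : MvPolynomial (Fin 2) ℂ) * C ((zc (μ+1) y k m : ℝ) : ℂ)
          + (C ((((m:ℝ) * zc (μ+1) y k m : ℝ)) : ℂ)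
            + C (((((m:ℝ)+1) * zc (μ+1) y k (m+1) : ℝ)) : ℂ))
        = C (((((j':ℝ)+1) * ((k:ℝ)+μ+1)/(μ+1) : ℝ)) : ℂ) * C ((zc ((μ+1)+1) y k m : ℝ) : ℂ) := by
      rw [← map_mul, ← map_mul, ← map_add, ← map_add, ← Complex.ofReal_mul, ← Complex.ofReal_mul,
        ← Complex.ofReal_add, ← Complex.ofReal_add]
      exact congrArg _ (congrArg _ hco)
    linear_combination (Tz ^ m) * hC
  have hp1 : (X 1 : MvPolynomial (Fin 2) ℂ)^(j'+1-k-1) = X 1^(j'-k) := by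
    rw [show j'+1-k-1 = j'-k from by omega]
  have hp2 : (X 1 : MvPolynomial (Fin 2) ℂ)^(j'+1-k) = X 1^(j'-k) * X 1 := by
    rw [show j'+1-k = (j'-k)+1 from by omega, pow_succ]
  rw [hp1, hp2]
  linear_combination (X 1 ^ (j'-k) : MvPolynomial (Fin 2) ℂ) * key


lemma rid3 (μ : ℝ) (hμ : 0 < μ) (y : ℝ) (k m : ℕ) :
    (m:ℝ) * zc (μ+1) y k m + μ * zc (μ+1) y k m = μ * zc μ y k m := by
  unfold zc
  have hrel : μ * (ascPochhammer ℝ m).eval (μ+1) = (ascPochhammer ℝ m).eval μ * (μ + m) := by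
    rw [← poch_succ_left', poch_succ_right']
  have h1 : (0:ℝ) < (ascPochhammer ℝ m).eval (μ+1) := ascPochhammer_pos m _ (by linarith)
  have h2 : (0:ℝ) < (ascPochhammer ℝ m).eval μ := ascPochhammer_pos m _ hμ
  field_simp
  linear_combination (-((k.choose m : ℝ) * (ascPochhammer ℝ m).eval y)) * hrel

open MvPolynomial in
lemma part3_ge (μ : ℝ) (hμ : 0 < μ) (k j : ℕ) (h : k ≤ j) :
    (1 - X 0 * X 1) * pderiv (0:Fin 2) (zernikeQ μ k j) - C ((μ:ℂ)) * X 1 * zernikeQ μ k j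
      = -(C ((μ:ℂ)) * zernikeQ (μ-1) k (j+1)) := by
  rw [expand_ge μ (by linarith) h, expand_ge (μ-1) (by linarith) (show k ≤ j+1 by omega)]
  rw [show (μ-1)+1 = μ by ring]
  set y : ℝ := ((j:ℕ):ℝ) + μ + 1 with hy
  have hyy : ((j+1:ℕ):ℝ) + (μ-1) + 1 = y := by rw [hy]; push_cast; ring
  rw [hyy]
  rw [pderiv_mul, pd0_zser,
    show pderiv (0:Fin 2) ((X 1 : MvPolynomial (Fin 2) ℂ) ^ (j-k)) = 0 by
      rw [pderiv_pow, pderiv_X_of_ne (show (1:Fin 2) ≠ 0 by decide)]; ring]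
  rw [zero_mul, zero_add]
  have hTz : (1 : MvPolynomial (Fin 2) ℂ) - X 0 * X 1 = -Tz := by unfold Tz; ring
  rw [hTz]
  have key1 : Tz * (∑ m ∈ Finset.range (k+1),
        C ((((m:ℝ) * zc (μ+1) y k m : ℝ)) : ℂ) * (Tz ^ (m-1) * X 1))
      = X 1 * ∑ m ∈ Finset.range (k+1),
          C ((((m:ℝ) * zc (μ+1) y k m : ℝ)) : ℂ) * Tz ^ m := by
    rw [Finset.mul_sum, Finset.mul_sum]
    refine Finset.sum_congr rfl fun m _ => ?_
    match m with
    | 0 => norm_num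
    | n+1 => simp only [Nat.add_sub_cancel]; ring
  have key2 : (∑ m ∈ Finset.range (k+1),
        C ((((m:ℝ) * zc (μ+1) y k m : ℝ)) : ℂ) * Tz ^ m)
        + C ((μ:ℂ)) * zser (μ+1) y k
      = C ((μ:ℂ)) * zser μ y k := by
    unfold zser
    simp only [Finset.mul_sum, ← Finset.sum_add_distrib]
    refine Finset.sum_congr rfl fun m _ => ?_
    have hco := rid3 μ hμ y k m
    have hC : (C ((((m:ℝ) * zc (μ+1) y k m : ℝ)) : ℂ) : MvPolynomial (Fin 2) ℂ)
          + C ((μ:ℝ):ℂ) * C ((zc (μ+1) y k m : ℝ):ℂ)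
        = C ((μ:ℝ):ℂ) * C ((zc μ y k m : ℝ):ℂ) := by
      rw [← map_mul, ← map_mul, ← map_add, ← Complex.ofReal_mul, ← Complex.ofReal_mul,
        ← Complex.ofReal_add]
      exact congrArg _ (congrArg _ hco)
    linear_combination (Tz ^ m) * hC
  have hp : (X 1 : MvPolynomial (Fin 2) ℂ)^(j+1-k) = X 1^(j-k) * X 1 := by
    rw [show j+1-k = (j-k)+1 from by omega, pow_succ]
  rw [hp]
  linear_combination (- (X 1 ^ (j-k) : MvPolynomial (Fin 2) ℂ)) * key1
    - (X 1 ^ (j-k) * X 1 : MvPolynomial (Fin 2) ℂ) * key2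

lemma rid4 (μ : ℝ) (hμ : 0 < μ) (k j m : ℕ) (hm : m ≤ j) (hjk : j+1 ≤ k) :
    ((k:ℝ)-(j:ℝ)+(m:ℝ)+μ) * zc (μ+1) ((k:ℝ)+μ+1) j m
        + ((m:ℝ)+1+μ) * zc (μ+1) ((k:ℝ)+μ+1) j (m+1)
      = μ * zc μ ((k:ℝ)+μ) (j+1) (m+1) := by
  unfold zc
  rw [poch_succ_right' (μ+1) m, poch_succ_right' ((k:ℝ)+μ+1) m,
    poch_succ_left' μ m, poch_succ_left' ((k:ℝ)+μ) m]
  have hpas : (((j+1).choose (m+1) : ℕ) : ℝ) = (j.choose m : ℝ) + (j.choose (m+1) : ℝ) := by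
    rw [Nat.choose_succ_succ]; push_cast; ring
  have hsub : ((j.choose (m+1)):ℝ) = (j.choose m : ℝ)*((j:ℝ)-(m:ℝ))/((m:ℝ)+1) := by
    have hch := choose_right_cast j m hm
    have hm1 : ((m:ℝ)+1) ≠ 0 := by positivity
    field_simp
    linarith
  rw [hpas, hsub]
  have h1 : (0:ℝ) < (ascPochhammer ℝ m).eval (μ+1) := ascPochhammer_pos m _ (by linarith)
  have h3 : ((m:ℝ)+1) ≠ 0 := by positivity
  field_simp
  ring

open MvPolynomial in
lemma CC (r s : ℝ) : (C ((r:ℂ)) : MvPolynomial (Fin 2) ℂ) * C ((s:ℂ)) = C (((r*s:ℝ):ℂ)) := by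
  rw [← map_mul, ← Complex.ofReal_mul]

lemma zc_zero (x y : ℝ) (a : ℕ) : zc x y a 0 = 1 := by
  unfold zc; simp [ascPochhammer_zero]

lemma zc_top (x y : ℝ) (a : ℕ) : zc x y a (a+1) = 0 := by
  unfold zc; simp

open MvPolynomial in
lemma part3_lt (μ : ℝ) (hμ : 0 < μ) (k j : ℕ) (hjk : j+1 ≤ k) :
    (1 - X 0 * X 1) * pderiv (0:Fin 2) (zernikeQ μ k j) - C ((μ:ℂ)) * X 1 * zernikeQ μ k j
      = -(C ((μ:ℂ)) * zernikeQ (μ-1) k (j+1)) := by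
  rw [expand_le μ (by linarith) (show j ≤ k by omega), expand_le (μ-1) (by linarith) hjk,
    show (μ-1)+1 = μ by ring, show (k:ℝ)+(μ-1)+1 = (k:ℝ)+μ by ring,
    pderiv_mul, pd0_zser, pderiv_pow, pderiv_X_self, mul_one,
    show (1 : MvPolynomial (Fin 2) ℂ) - X 0 * X 1 = -Tz by unfold Tz; ring]
  set y : ℝ := (k:ℝ) + μ + 1 with hy
  have hA : Tz * (X 0 * ∑ m ∈ Finset.range (j+1),
        C ((((m:ℝ) * zc (μ+1) y j m : ℝ)) : ℂ) * (Tz ^ (m-1) * X 1))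
      = ∑ m ∈ Finset.range (j+1),
          (C ((((m:ℝ) * zc (μ+1) y j m : ℝ)) : ℂ) * Tz ^ (m+1)
            + C ((((m:ℝ) * zc (μ+1) y j m : ℝ)) : ℂ) * Tz ^ m) := by
    rw [Finset.mul_sum, Finset.mul_sum]
    refine Finset.sum_congr rfl fun m _ => ?_
    match m with
    | 0 => norm_num
    | n+1 =>
      rw [show Tz * ((X 0 : MvPolynomial (Fin 2) ℂ) * (C ((((n+1:ℕ):ℝ) * zc (μ+1) y j (n+1) : ℝ) : ℂ) * (Tz ^ (n+1-1) * X 1)))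
          = C ((((n+1:ℕ):ℝ) * zc (μ+1) y j (n+1) : ℝ) : ℂ) * (Tz ^ (n+1) * (X 0 * X 1)) by
        simp only [Nat.add_sub_cancel]; ring, hX01]
      ring
  have hT1 : Tz * ((((k-j:ℕ)) : MvPolynomial (Fin 2) ℂ) * zser (μ+1) y j)
      = ∑ m ∈ Finset.range (j+1),
          C (((((k-j:ℕ):ℝ) * zc (μ+1) y j m : ℝ)) : ℂ) * Tz ^ (m+1) := by
    rw [show ((((k-j:ℕ)) : MvPolynomial (Fin 2) ℂ)) = C ((((k-j:ℕ):ℝ):ℂ)) by push_cast; simp]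
    unfold zser
    rw [Finset.mul_sum, Finset.mul_sum]
    refine Finset.sum_congr rfl fun m _ => ?_
    rw [← CC ((k-j:ℕ):ℝ) (zc (μ+1) y j m)]
    ring
  have hT3 : C ((μ:ℂ)) * ((Tz + 1) * zser (μ+1) y j)
      = ∑ m ∈ Finset.range (j+1),
          (C (((μ * zc (μ+1) y j m : ℝ)) : ℂ) * Tz ^ (m+1)
            + C (((μ * zc (μ+1) y j m : ℝ)) : ℂ) * Tz ^ m) := by
    unfold zser
    rw [Finset.mul_sum, Finset.mul_sum]
    refine Finset.sum_congr rfl fun m _ => ?_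
    rw [← CC μ (zc (μ+1) y j m)]
    ring
  have hB : (∑ m ∈ Finset.range (j+1), C ((((m:ℝ) * zc (μ+1) y j m : ℝ)) : ℂ) * Tz ^ m)
        + ∑ m ∈ Finset.range (j+1), C (((μ * zc (μ+1) y j m : ℝ)) : ℂ) * Tz ^ m
      = (∑ m ∈ Finset.range (j+1),
          C ((((((m:ℝ)+1)+μ) * zc (μ+1) y j (m+1) : ℝ)) : ℂ) * Tz ^ (m+1)) + C ((μ:ℂ)) := by
    rw [← Finset.sum_add_distrib]
    rw [Finset.sum_range_succ' (fun m => C ((((m:ℝ) * zc (μ+1) y j m : ℝ)) : ℂ) * Tz ^ m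
        + C (((μ * zc (μ+1) y j m : ℝ)) : ℂ) * Tz ^ m) j]
    rw [Finset.sum_range_succ (fun m => C ((((((m:ℝ)+1)+μ) * zc (μ+1) y j (m+1) : ℝ)) : ℂ) * Tz ^ (m+1)) j]
    rw [zc_top (μ+1) y j]
    simp only [mul_zero, zero_mul, Complex.ofReal_zero, map_zero, add_zero, zero_add, zc_zero,
      mul_one, Nat.cast_zero, pow_zero]
    congr 1
    refine Finset.sum_congr rfl fun m _ => ?_
    rw [show ((((m:ℝ)+1)+μ) * zc (μ+1) y j (m+1)) = ((m+1:ℕ):ℝ) * zc (μ+1) y j (m+1)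
        + μ * zc (μ+1) y j (m+1) by push_cast; ring,
      Complex.ofReal_add, map_add]
    ring
  have hM : (∑ m ∈ Finset.range (j+1),
          C (((((k-j:ℕ):ℝ) * zc (μ+1) y j m : ℝ)) : ℂ) * Tz ^ (m+1))
        + (∑ m ∈ Finset.range (j+1), C ((((m:ℝ) * zc (μ+1) y j m : ℝ)) : ℂ) * Tz ^ (m+1))
        + (∑ m ∈ Finset.range (j+1), C (((μ * zc (μ+1) y j m : ℝ)) : ℂ) * Tz ^ (m+1))
        + (∑ m ∈ Finset.range (j+1),
          C ((((((m:ℝ)+1)+μ) * zc (μ+1) y j (m+1) : ℝ)) : ℂ) * Tz ^ (m+1))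
      = ∑ m ∈ Finset.range (j+1),
          C ((μ:ℂ)) * (C ((zc μ ((k:ℝ)+μ) (j+1) (m+1) : ℝ) : ℂ) * Tz ^ (m+1)) := by
    simp only [← Finset.sum_add_distrib]
    refine Finset.sum_congr rfl fun m hm => ?_
    rw [Finset.mem_range, Nat.lt_succ_iff] at hm
    have hco : ((k-j:ℕ):ℝ) * zc (μ+1) y j m + (m:ℝ) * zc (μ+1) y j m + μ * zc (μ+1) y j m
          + (((m:ℝ)+1)+μ) * zc (μ+1) y j (m+1)
        = μ * zc μ ((k:ℝ)+μ) (j+1) (m+1) := by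
      have hr := rid4 μ hμ k j m hm hjk
      rw [← hy] at hr
      rw [show ((k-j:ℕ):ℝ) = (k:ℝ)-(j:ℝ) by rw [Nat.cast_sub (by omega)]]
      linarith [hr]
    have hC : (C (((((k-j:ℕ):ℝ) * zc (μ+1) y j m : ℝ)) : ℂ) : MvPolynomial (Fin 2) ℂ)
          + C ((((m:ℝ) * zc (μ+1) y j m : ℝ)) : ℂ)
          + C (((μ * zc (μ+1) y j m : ℝ)) : ℂ)
          + C ((((((m:ℝ)+1)+μ) * zc (μ+1) y j (m+1) : ℝ)) : ℂ)
        = C ((μ:ℝ):ℂ) * C ((zc μ ((k:ℝ)+μ) (j+1) (m+1) : ℝ) : ℂ) := by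
      rw [CC, ← map_add, ← map_add, ← map_add, ← Complex.ofReal_add, ← Complex.ofReal_add,
        ← Complex.ofReal_add]
      exact congrArg _ (congrArg _ hco)
    linear_combination (Tz ^ (m+1)) * hC
  have key : Tz * ((((k-j:ℕ)) : MvPolynomial (Fin 2) ℂ) * zser (μ+1) y j)
        + Tz * (X 0 * ∑ m ∈ Finset.range (j+1),
            C ((((m:ℝ) * zc (μ+1) y j m : ℝ)) : ℂ) * (Tz ^ (m-1) * X 1))
        + C ((μ:ℂ)) * ((Tz + 1) * zser (μ+1) y j)
      = C ((μ:ℂ)) * zser μ ((k:ℝ)+μ) (j+1) := by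
    rw [hT1, hA, hT3]
    conv_rhs => rw [zser, Finset.mul_sum,
      Finset.sum_range_succ' (fun m => C ((μ:ℂ)) * (C ((zc μ ((k:ℝ)+μ) (j+1) m : ℝ) : ℂ) * Tz ^ m)) (j+1)]
    have hc20 : (C ((μ:ℂ)) : MvPolynomial (Fin 2) ℂ) * (C ((zc μ ((k:ℝ)+μ) (j+1) 0 : ℝ) : ℂ) * Tz ^ 0) = C ((μ:ℂ)) := by
      rw [zc_zero]; simp
    rw [Finset.sum_add_distrib, Finset.sum_add_distrib]
    linear_combination hB + hM - hc20
  have hp : (X 0 : MvPolynomial (Fin 2) ℂ)^(k-j) = X 0^(k-(j+1)) * X 0 := by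
    rw [show k-j = (k-(j+1))+1 from by omega, pow_succ]
  have hp2 : (X 0 : MvPolynomial (Fin 2) ℂ)^(k-j-1) = X 0^(k-(j+1)) := by
    rw [show k-j-1 = k-(j+1) from by omega]
  rw [hp, hp2]
  linear_combination (-((X 0 : MvPolynomial (Fin 2) ℂ)^(k-(j+1)))) * key
    - (C ((μ:ℂ)) * (X 0 : MvPolynomial (Fin 2) ℂ)^(k-(j+1)) * zser (μ+1) y j) * hX01


open MvPolynomial in
lemma part2 (μ : ℝ) (k : ℕ) : pderiv (1 : Fin 2) (zernikeQ μ k 0) = 0 := by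
  unfold zernikeQ
  rw [if_pos (Nat.zero_le k)]
  have hj : jacobiP μ ((k - 0 : ℕ) : ℝ) 0 = 1 := by
    simp [jacobiP, ascPochhammer_zero]
  rw [hj, map_one, mul_one, pderiv_C_mul, pderiv_pow,
    pderiv_X_of_ne (show (0:Fin 2) ≠ 1 by decide)]
  ring

open MvPolynomial in
theorem zernike_ladder_Z2 (μ : ℝ) (k j : ℕ) :
    (μ > -1 → 1 ≤ j →
      pderiv (1 : Fin 2) (zernikeQ μ k j) =
        C ((((j : ℝ) * ((k : ℝ) + μ + 1) / (μ + 1) : ℝ)) : ℂ) *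
          zernikeQ (μ + 1) k (j - 1)) ∧
    (j = 0 → pderiv (1 : Fin 2) (zernikeQ μ k j) = 0) ∧
    (μ > 0 →
      (1 - X 0 * X 1) * pderiv (0 : Fin 2) (zernikeQ μ k j) -
          C ((μ : ℂ)) * X 1 * zernikeQ μ k j =
        -(C ((μ : ℂ)) * zernikeQ (μ - 1) k (j + 1))) := by
  refine ⟨?_, ?_, ?_⟩
  · intro hμ hj
    obtain ⟨j', rfl⟩ : ∃ j', j = j' + 1 := ⟨j - 1, by omega⟩
    simp only [Nat.add_sub_cancel]
    rw [show ((j'+1:ℕ):ℝ) = (j':ℝ)+1 from by push_cast; ring]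
    rcases le_or_gt (j'+1) k with h | h
    · exact part1_le μ hμ k j' h
    · exact part1_gt μ hμ k j' (by omega)
  · rintro rfl
    exact part2 μ k
  · intro hμ
    rcases le_or_gt k j with h | h
    · exact part3_ge μ hμ k j h
    · exact part3_lt μ hμ k j (by omega)
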